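/- arXiv:1108.5042 — 3 statements merged into one kernel-verified Lean document; each statement's English description precedes it below -/
import Mathlib

section
/- For all n ≥ 2, the sum over p from 1 to n-1 of (2(n-p)/(n(n-1)))·log(1 + (n-p-1)(n-p-2)/(n-1)) equals log n - 1 + o(1) as n → ∞; more precisely, it differs from log n - 1 by a function tending to 0. -/
open Filter

noncomputable def hhAux (n : ℕ) (x : ℝ) : ℝ :=
  2 * x * Real.log (1 + x ^ 2 / ((n : ℝ) - 1)) / ((n : ℝ) * ((n : ℝ) - 1))

noncomputable def FFAux (n : ℕ) (x : ℝ) : ℝ :=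
  ((((n : ℝ) - 1) + x ^ 2) * Real.log (1 + x ^ 2 / ((n : ℝ) - 1)) - x ^ 2)
    / ((n : ℝ) * ((n : ℝ) - 1))

noncomputable def RAux (t : ℝ) (n : ℕ) : ℝ :=
  (((n : ℝ) - 1) + ((n : ℝ) + t) ^ 2) / ((n : ℝ) * ((n : ℝ) - 1))

lemma c_pos {n : ℕ} (hn : 2 ≤ n) : (0 : ℝ) < (n : ℝ) - 1 := by
  have : (2 : ℝ) ≤ (n : ℝ) := by exact_mod_cast hn
  linarith

lemma arg_pos {n : ℕ} (hn : 2 ≤ n) (x : ℝ) : (0 : ℝ) < 1 + x ^ 2 / ((n : ℝ) - 1) := by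
  have hc := c_pos hn
  positivity

lemma log_arg_nonneg {n : ℕ} (hn : 2 ≤ n) (x : ℝ) :
    0 ≤ Real.log (1 + x ^ 2 / ((n : ℝ) - 1)) := by
  have hc := c_pos hn
  apply Real.log_nonneg
  have : 0 ≤ x ^ 2 / ((n:ℝ) - 1) := by positivity
  linarith

lemma hasDerivAt_FFAux {n : ℕ} (hn : 2 ≤ n) (x : ℝ) :
    HasDerivAt (FFAux n) (hhAux n x) x := by
  have hc := c_pos hn
  have harg := arg_pos hn x
  set c : ℝ := (n : ℝ) - 1
  have h1 : HasDerivAt (fun x : ℝ => 1 + x ^ 2 / c) (2 * x / c) x := by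
    have := ((hasDerivAt_pow 2 x).div_const c).const_add 1
    simpa using this
  have h2 : HasDerivAt (fun x : ℝ => Real.log (1 + x ^ 2 / c))
      ((2 * x / c) / (1 + x ^ 2 / c)) x := by
    simpa [div_eq_inv_mul, mul_comm, Function.comp_def] using (Real.hasDerivAt_log harg.ne').comp x h1
  have h3 : HasDerivAt (fun x : ℝ => (c + x ^ 2) * Real.log (1 + x ^ 2 / c) - x ^ 2)
      ((2 * x) * Real.log (1 + x ^ 2 / c)
        + (c + x ^ 2) * ((2 * x / c) / (1 + x ^ 2 / c)) - 2 * x) x := by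
    have h4 : HasDerivAt (fun x : ℝ => c + x ^ 2) (2 * x) x := by
      simpa using (hasDerivAt_pow 2 x).const_add c
    have := (h4.mul h2).sub (by simpa using hasDerivAt_pow 2 x)
    exact this
  have key : (2 * x) * Real.log (1 + x ^ 2 / c)
        + (c + x ^ 2) * ((2 * x / c) / (1 + x ^ 2 / c)) - 2 * x
      = 2 * x * Real.log (1 + x ^ 2 / c) := by
    have : (c + x ^ 2) * ((2 * x / c) / (1 + x ^ 2 / c)) = 2 * x := by
      field_simp
    rw [this]; ring
  rw [key] at h3
  exact h3.div_const _

lemma integral_hhAux {n : ℕ} (hn : 2 ≤ n) (a b : ℝ) :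
    ∫ x in a..b, hhAux n x = FFAux n b - FFAux n a := by
  have hc := c_pos hn
  apply intervalIntegral.integral_eq_sub_of_hasDerivAt (fun x _ => hasDerivAt_FFAux hn x)
  apply Continuous.intervalIntegrable
  unfold hhAux
  have hlog : Continuous (fun x : ℝ => Real.log (1 + x ^ 2 / ((n : ℝ) - 1))) := by
    apply Continuous.log
    · fun_prop
    · exact fun x => (arg_pos hn x).ne'
  exact ((continuous_const.mul continuous_id').mul hlog).div_const _

lemma hhAux_nonneg {n : ℕ} (hn : 2 ≤ n) {x : ℝ} (hx : 0 ≤ x) : 0 ≤ hhAux n x := by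
  have hc := c_pos hn
  have hn' : (0:ℝ) < n := by positivity
  apply div_nonneg _ (by positivity)
  exact mul_nonneg (by positivity) (log_arg_nonneg hn x)

lemma monotoneOn_hhAux {n : ℕ} (hn : 2 ≤ n) : MonotoneOn (hhAux n) (Set.Ici 0) := by
  have hc := c_pos hn
  have hn' : (0:ℝ) < n := by positivity
  intro x hx y hy hxy
  simp only [Set.mem_Ici] at hx hy
  unfold hhAux
  have hll : Real.log (1 + x ^ 2 / ((n:ℝ) - 1)) ≤ Real.log (1 + y ^ 2 / ((n:ℝ) - 1)) := by
    have hxy2 : x ^ 2 ≤ y ^ 2 := by nlinarith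
    have := arg_pos hn x
    gcongr
  refine div_le_div_of_nonneg_right ?_ (by positivity)
  exact mul_le_mul (by linarith) hll (log_arg_nonneg hn x) (by positivity)

lemma FFAux_zero (n : ℕ) : FFAux n 0 = 0 := by simp [FFAux]

lemma FF_identity {n : ℕ} (hn : 2 ≤ n) (t : ℝ) :
    FFAux n ((n : ℝ) + t) - (Real.log n - 1)
      = RAux t n * Real.log (RAux t n) + (RAux t n - 1) * Real.log n
        + (1 - RAux t n) + 1 / (n : ℝ) := by
  have hc := c_pos hn
  have hn' : (0:ℝ) < (n:ℝ) := by positivity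
  have hca : (0:ℝ) < ((n:ℝ) - 1) + ((n:ℝ) + t) ^ 2 := by positivity
  unfold FFAux RAux
  rw [show (1:ℝ) + ((n:ℝ)+t)^2/((n:ℝ)-1)
      = (((n:ℝ)-1) + ((n:ℝ)+t)^2)/((n:ℝ)-1) by field_simp]
  rw [Real.log_div hca.ne' hc.ne',
    Real.log_div hca.ne' (mul_ne_zero hn'.ne' hc.ne'),
    Real.log_mul hn'.ne' hc.ne']
  field_simp
  ring

lemma tendsto_FF (t : ℝ) :
    Tendsto (fun n : ℕ => FFAux n ((n : ℝ) + t) - (Real.log n - 1)) atTop (nhds 0) := by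
  have h0 : Tendsto (fun n : ℕ => 1 / (n : ℝ)) atTop (nhds 0) :=
    tendsto_one_div_atTop_nhds_zero_nat
  have hden : Tendsto (fun n : ℕ => 1 - 1/(n:ℝ)) atTop (nhds 1) := by
    have h : Tendsto (fun n : ℕ => (1:ℝ) - 1/(n:ℝ)) atTop (nhds (1 - 0)) :=
      Tendsto.sub tendsto_const_nhds h0
    simpa using h
  have hR1 : Tendsto (fun n : ℕ => RAux t n) atTop (nhds 1) := by
    have hnum : Tendsto (fun n : ℕ =>
        (1/(n:ℝ)) * (1 - 1/(n:ℝ)) + (1 + t * (1/(n:ℝ))) ^ 2) atTop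
        (nhds (0 * (1 - 0) + (1 + t * 0) ^ 2)) :=
      (h0.mul (Tendsto.sub tendsto_const_nhds h0)).add
        ((Tendsto.add tendsto_const_nhds (Tendsto.mul tendsto_const_nhds h0)).pow 2)
    norm_num at hnum
    have h := hnum.div hden one_ne_zero
    norm_num at h
    apply Tendsto.congr' _ h
    filter_upwards [eventually_ge_atTop 2] with n hn
    have hc := c_pos hn
    have hn' : (0:ℝ) < (n:ℝ) := by positivity
    unfold RAux
    simp only [Pi.div_apply]
    field_simp
  have hR2 : Tendsto (fun n : ℕ => RAux t n * Real.log (RAux t n)) atTop (nhds 0) := by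
    have hcont : ContinuousAt (fun x : ℝ => x * Real.log x) 1 :=
      continuousAt_id.mul (Real.continuousAt_log one_ne_zero)
    have h := hcont.tendsto.comp hR1
    simpa [Function.comp_def] using h
  have hlogn : Tendsto (fun n : ℕ => Real.log n / (n : ℝ)) atTop (nhds 0) := by
    have h := Real.isLittleO_log_id_atTop.tendsto_div_nhds_zero.comp
      (tendsto_natCast_atTop_atTop (R := ℝ))
    simpa [Function.comp_def] using h
  have hR3 : Tendsto (fun n : ℕ => (RAux t n - 1) * Real.log n) atTop (nhds 0) := by
    have hnum : Tendsto (fun n : ℕ => (2 + 2*t) + (t^2 - 1) * (1/(n:ℝ))) atTop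
        (nhds ((2 + 2*t) + (t^2 - 1) * 0)) :=
      Tendsto.add tendsto_const_nhds (Tendsto.mul tendsto_const_nhds h0)
    norm_num at hnum
    have hfac := hnum.div hden one_ne_zero
    norm_num at hfac
    have h := hfac.mul hlogn
    rw [mul_zero] at h
    apply Tendsto.congr' _ h
    filter_upwards [eventually_ge_atTop 2] with n hn
    have hc := c_pos hn
    have hn' : (0:ℝ) < (n:ℝ) := by positivity
    unfold RAux
    simp only [Pi.div_apply]
    field_simp
    ring
  have hR4 : Tendsto (fun n : ℕ => 1 - RAux t n) atTop (nhds 0) := by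
    have h : Tendsto (fun n : ℕ => (1:ℝ) - RAux t n) atTop (nhds (1 - 1)) :=
      Tendsto.sub tendsto_const_nhds hR1
    simpa using h
  have htot := ((hR2.add hR3).add hR4).add h0
  simp only [add_zero] at htot
  apply Tendsto.congr' _ htot
  filter_upwards [eventually_ge_atTop 2] with n hn
  exact (FF_identity hn t).symm

lemma sum_reindex (n : ℕ) :
    (∑ p ∈ Finset.Icc 1 (n - 1),
        (2 * ((n - p : ℕ) : ℝ) / ((n : ℝ) * ((n : ℝ) - 1))) *
          Real.log (1 + (((n - p - 1) * (n - p - 2) : ℕ) : ℝ) / ((n : ℝ) - 1)))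
      = ∑ k ∈ Finset.Icc 1 (n - 1),
        (2 * ((k : ℕ) : ℝ) / ((n : ℝ) * ((n : ℝ) - 1))) *
          Real.log (1 + (((k - 1) * (k - 2) : ℕ) : ℝ) / ((n : ℝ) - 1)) := by
  apply Finset.sum_nbij' (fun p => n - p) (fun k => n - k)
  · intro p hp
    simp only [Finset.mem_Icc] at *
    omega
  · intro k hk
    simp only [Finset.mem_Icc] at *
    omega
  · intro p hp
    simp only [Finset.mem_Icc] at hp
    omega
  · intro k hk
    simp only [Finset.mem_Icc] at hk
    omega
  · intro p hp
    rfl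

lemma sandwich {n : ℕ} (hn : 4 ≤ n) :
    FFAux n (((n - 3 : ℕ) : ℝ)) ≤
      (∑ p ∈ Finset.Icc 1 (n - 1),
        (2 * ((n - p : ℕ) : ℝ) / ((n : ℝ) * ((n : ℝ) - 1))) *
          Real.log (1 + (((n - p - 1) * (n - p - 2) : ℕ) : ℝ) / ((n : ℝ) - 1)))
      ∧ (∑ p ∈ Finset.Icc 1 (n - 1),
        (2 * ((n - p : ℕ) : ℝ) / ((n : ℝ) * ((n : ℝ) - 1))) *
          Real.log (1 + (((n - p - 1) * (n - p - 2) : ℕ) : ℝ) / ((n : ℝ) - 1)))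
        ≤ FFAux n ((n : ℕ) : ℝ) := by
  have hn2 : 2 ≤ n := by omega
  have hc := c_pos hn2
  have hn' : (0:ℝ) < (n:ℝ) := by positivity
  rw [sum_reindex n]
  have hIcc : Finset.Icc 1 (n - 1) = Finset.Ico 1 n := by
    rw [← Finset.Ico_add_one_right_eq_Icc]
    congr 1
    omega
  rw [hIcc]
  have hmono := monotoneOn_hhAux hn2
  constructor
  · -- lower bound
    have step1 : ∑ k ∈ Finset.Ico 1 n, hhAux n (((k - 2 : ℕ) : ℝ))
        ≤ ∑ k ∈ Finset.Ico 1 n,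
          (2 * ((k : ℕ) : ℝ) / ((n : ℝ) * ((n : ℝ) - 1))) *
            Real.log (1 + (((k - 1) * (k - 2) : ℕ) : ℝ) / ((n : ℝ) - 1)) := by
      apply Finset.sum_le_sum
      intro k _
      rw [div_mul_eq_mul_div]
      unfold hhAux
      refine div_le_div_of_nonneg_right ?_ (by positivity)
      have hargle : Real.log (1 + ((k - 2 : ℕ) : ℝ) ^ 2 / ((n:ℝ) - 1))
          ≤ Real.log (1 + (((k - 1) * (k - 2) : ℕ) : ℝ) / ((n:ℝ) - 1)) := by
        have hnat : ((k - 2) * (k - 2) : ℕ) ≤ ((k - 1) * (k - 2) : ℕ) :=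
          Nat.mul_le_mul_right _ (by omega)
        have hcast : ((k - 2 : ℕ) : ℝ) ^ 2 ≤ (((k - 1) * (k - 2) : ℕ) : ℝ) := by
          rw [sq]
          exact_mod_cast hnat
        have := arg_pos hn2 ((k - 2 : ℕ) : ℝ)
        gcongr
      refine mul_le_mul ?_ hargle (log_arg_nonneg hn2 _) (by positivity)
      have : ((k - 2 : ℕ) : ℝ) ≤ (k : ℝ) := by exact_mod_cast Nat.sub_le k 2
      linarith
    have step2 : (∫ x in (0:ℝ)..((0:ℝ) + ((n - 3 : ℕ) : ℝ)), hhAux n x)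
        ≤ ∑ i ∈ Finset.range (n - 3), hhAux n ((0:ℝ) + ((i + 1 : ℕ) : ℝ)) := by
      apply MonotoneOn.integral_le_sum
      apply hmono.mono
      intro x hx
      exact hx.1
    have step3 : ∑ i ∈ Finset.range (n - 3), hhAux n ((0:ℝ) + ((i + 1 : ℕ) : ℝ))
        = ∑ k ∈ Finset.Ico 3 n, hhAux n (((k - 2 : ℕ) : ℝ)) := by
      rw [Finset.sum_Ico_eq_sum_range]
      apply Finset.sum_congr rfl
      intro i _
      congr 2
      push_cast
      have : 3 + i - 2 = i + 1 := by omega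
      rw [this]
      push_cast
      ring
    have step4 : ∑ k ∈ Finset.Ico 3 n, hhAux n (((k - 2 : ℕ) : ℝ))
        ≤ ∑ k ∈ Finset.Ico 1 n, hhAux n (((k - 2 : ℕ) : ℝ)) := by
      apply Finset.sum_le_sum_of_subset_of_nonneg
      · exact Finset.Ico_subset_Ico (by omega) le_rfl
      · intro i _ _
        exact hhAux_nonneg hn2 (Nat.cast_nonneg _)
    have hint : (∫ x in (0:ℝ)..((0:ℝ) + ((n - 3 : ℕ) : ℝ)), hhAux n x)
        = FFAux n (((n - 3 : ℕ) : ℝ)) := by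
      rw [integral_hhAux hn2, FFAux_zero, sub_zero, zero_add]
    calc FFAux n (((n - 3 : ℕ) : ℝ)) = _ := hint.symm
      _ ≤ _ := step2
      _ = _ := step3
      _ ≤ _ := step4
      _ ≤ _ := step1
  · -- upper bound
    have step1 : ∑ k ∈ Finset.Ico 1 n,
          (2 * ((k : ℕ) : ℝ) / ((n : ℝ) * ((n : ℝ) - 1))) *
            Real.log (1 + (((k - 1) * (k - 2) : ℕ) : ℝ) / ((n : ℝ) - 1))
        ≤ ∑ k ∈ Finset.Ico 1 n, hhAux n ((k : ℕ) : ℝ) := by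
      apply Finset.sum_le_sum
      intro k _
      rw [div_mul_eq_mul_div]
      unfold hhAux
      refine div_le_div_of_nonneg_right ?_ (by positivity)
      have hge1 : (0:ℝ) ≤ (((k - 1) * (k - 2) : ℕ) : ℝ) / ((n:ℝ) - 1) := by positivity
      refine mul_le_mul le_rfl ?_ (Real.log_nonneg (by linarith)) (by positivity)
      have hnat : ((k - 1) * (k - 2) : ℕ) ≤ (k * k : ℕ) :=
        Nat.mul_le_mul (Nat.sub_le _ _) (Nat.sub_le _ _)
      have hcast : (((k - 1) * (k - 2) : ℕ) : ℝ) ≤ ((k : ℕ) : ℝ) ^ 2 := by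
        rw [sq]
        exact_mod_cast hnat
      have := arg_pos hn2 (((k - 1) * (k - 2) : ℕ) : ℝ)
      have hpos : (0:ℝ) < 1 + (((k - 1) * (k - 2) : ℕ) : ℝ) / ((n:ℝ) - 1) := by
        have : (0:ℝ) ≤ (((k - 1) * (k - 2) : ℕ) : ℝ) / ((n:ℝ) - 1) := by positivity
        linarith
      gcongr
    have step2 : ∑ k ∈ Finset.Ico 1 n, hhAux n ((k : ℕ) : ℝ)
        ≤ ∫ x in ((1:ℕ):ℝ)..((n:ℕ):ℝ), hhAux n x := by
      apply MonotoneOn.sum_le_integral_Ico (by omega)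
      apply hmono.mono
      intro x hx
      have : ((1:ℕ):ℝ) ≤ x := hx.1
      simp only [Set.mem_Ici]
      exact le_trans (by norm_num) this
    have step3 : (∫ x in ((1:ℕ):ℝ)..((n:ℕ):ℝ), hhAux n x) ≤ FFAux n ((n:ℕ):ℝ) := by
      rw [integral_hhAux hn2]
      have h01 : (0:ℝ) ≤ FFAux n ((1:ℕ):ℝ) := by
        have := intervalIntegral.integral_nonneg (f := hhAux n) (a := (0:ℝ)) (b := ((1:ℕ):ℝ)) (μ := MeasureTheory.volume)
          (by norm_num) (fun u hu => hhAux_nonneg hn2 hu.1)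
        rwa [integral_hhAux hn2, FFAux_zero, sub_zero] at this
      linarith
    exact le_trans step1 (le_trans step2 step3)

/-- `∑_{p=1}^{n-1} (2(n-p)/(n(n-1)))·log(1 + (n-p-1)(n-p-2)/(n-1)) = log n - 1 + o(1)`:
the difference with `log n - 1` tends to `0` as `n → ∞`. Natural subtraction makes
`(n-p-1)(n-p-2) = 0` when `p = n-1` or `p = n-2`. -/
theorem stmt8 :
    Tendsto (fun n : ℕ =>
      (∑ p ∈ Finset.Icc 1 (n - 1),
        (2 * ((n - p : ℕ) : ℝ) / ((n : ℝ) * ((n : ℝ) - 1))) *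
          Real.log (1 + (((n - p - 1) * (n - p - 2) : ℕ) : ℝ) / ((n : ℝ) - 1)))
        - (Real.log n - 1)) atTop (nhds 0) := by
  have hlow : Tendsto (fun n : ℕ => FFAux n (((n - 3 : ℕ) : ℝ)) - (Real.log n - 1))
      atTop (nhds 0) := by
    apply Tendsto.congr' _ (tendsto_FF (-3))
    filter_upwards [eventually_ge_atTop 3] with n hn
    congr 2
    push_cast [hn]
    ring
  have hhigh : Tendsto (fun n : ℕ => FFAux n ((n : ℕ) : ℝ) - (Real.log n - 1))
      atTop (nhds 0) := by
    have := tendsto_FF 0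
    simpa using this
  apply tendsto_of_tendsto_of_tendsto_of_le_of_le' hlow hhigh
  · filter_upwards [eventually_ge_atTop 4] with n hn
    exact sub_le_sub_right (sandwich hn).1 _
  · filter_upwards [eventually_ge_atTop 4] with n hn
    exact sub_le_sub_right (sandwich hn).2 _
end

section
/- For every integer n ≥ 1, the sum ∑_{r=1}^{n-1} r·log(r²/n) is at most ∫_0^n u·log(u²/n) du + 2√n/e. -/
open Real intervalIntegral

lemma tangent_aux (n c u : ℝ) (hn : 0 < n) (hc : 0 < c) (hu : 0 ≤ u) :
    c * Real.log (c ^ 2 / n) + (Real.log (c ^ 2 / n) + 2) * (u - c)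
      ≤ u * Real.log (u ^ 2 / n) := by
  rcases eq_or_lt_of_le hu with h0 | hu
  · rw [← h0, zero_mul]
    nlinarith [hc]
  · have hkey : Real.log c - Real.log u ≤ c / u - 1 := by
      have h := Real.log_le_sub_one_of_pos (show (0:ℝ) < c / u by positivity)
      rwa [Real.log_div hc.ne' hu.ne'] at h
    have h2 : u * (Real.log c - Real.log u) ≤ c - u := by
      have := mul_le_mul_of_nonneg_left hkey hu.le
      have hcu : u * (c / u - 1) = c - u := by field_simp
      linarith [this, hcu ▸ this]
    rw [Real.log_div (by positivity) hn.ne', Real.log_div (by positivity) hn.ne',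
      Real.log_pow, Real.log_pow]
    push_cast
    nlinarith [h2]

lemma cont_aux (n : ℝ) (hn : 0 < n) :
    Continuous (fun u : ℝ => u * Real.log (u ^ 2 / n)) := by
  have heq : (fun u : ℝ => u * Real.log (u ^ 2 / n))
      = fun u : ℝ => 2 * (u * Real.log u) - Real.log n * u := by
    funext u
    by_cases h : u = 0
    · simp [h]
    · rw [Real.log_div (pow_ne_zero _ h) hn.ne', Real.log_pow]
      push_cast; ring
  rw [heq]
  exact (continuous_const.mul Real.continuous_mul_log).sub
    (continuous_const.mul continuous_id')

lemma lb_aux (n u : ℝ) (hn : 0 < n) (hu : 0 ≤ u) :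
    -(2 * Real.sqrt n / Real.exp 1) ≤ u * Real.log (u ^ 2 / n) := by
  set c : ℝ := Real.sqrt n / Real.exp 1 with hc
  have hc0 : 0 < c := by positivity
  have hL : Real.log (c ^ 2 / n) = -2 := by
    have h1 : c ^ 2 / n = (Real.exp 1 ^ 2)⁻¹ := by
      rw [hc, div_pow, Real.sq_sqrt hn.le]
      field_simp
    rw [h1, Real.log_inv, Real.log_pow, Real.log_exp]
    norm_num
  have h := tangent_aux n c u hn hc0 hu
  rw [hL] at h
  have he : 2 * Real.sqrt n / Real.exp 1 = 2 * c := by rw [hc]; ring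
  rw [he]
  linarith

/-- For every integer `n ≥ 1`,
`∑_{r=1}^{n-1} r·log(r²/n) ≤ ∫_0^n u·log(u²/n) du + 2√n/e`. -/
theorem stmt9 (n : ℕ) (hn : 1 ≤ n) :
    ∑ r ∈ Finset.Icc 1 (n - 1), (r : ℝ) * Real.log ((r : ℝ) ^ 2 / n)
      ≤ (∫ u in (0:ℝ)..(n : ℝ), u * Real.log (u ^ 2 / n))
        + 2 * Real.sqrt n / Real.exp 1 := by
  have hn0 : (0:ℝ) < n := by exact_mod_cast hn
  set f : ℝ → ℝ := fun u => u * Real.log (u ^ 2 / n) with hf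
  have hcont : Continuous f := cont_aux n hn0
  have hint : ∀ a b : ℝ, IntervalIntegrable f MeasureTheory.volume a b :=
    fun a b => hcont.intervalIntegrable a b
  -- per-point bound:
  have hpt : ∀ r : ℕ, 1 ≤ r →
      (r : ℝ) * Real.log ((r : ℝ) ^ 2 / n)
        ≤ ∫ u in ((r : ℝ) - 1/2)..((r : ℝ) + 1/2), f u := by
    intro r hr
    have hr0 : (1:ℝ) ≤ (r:ℝ) := by exact_mod_cast hr
    set c : ℝ := (r : ℝ)
    set L : ℝ := Real.log (c ^ 2 / n) with hL
    have hglin : ∫ u in (c - 1/2)..(c + 1/2), (c * L + (L + 2) * (u - c)) = c * L := by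
      have h1 : ∀ u : ℝ, c * L + (L + 2) * (u - c)
          = (L + 2) * u + (c * L - (L + 2) * c) := fun u => by ring
      rw [intervalIntegral.integral_congr (g := fun u => (L + 2) * u + (c * L - (L + 2) * c))
        (fun u _ => h1 u),
        intervalIntegral.integral_add (f := fun u => (L + 2) * u) (g := fun _ => c * L - (L + 2) * c)
          ((continuous_const.mul continuous_id').intervalIntegrable _ _)
          intervalIntegrable_const,
        intervalIntegral.integral_const_mul, integral_id, intervalIntegral.integral_const,
        smul_eq_mul]
      ring
    calc c * L = ∫ u in (c - 1/2)..(c + 1/2), (c * L + (L + 2) * (u - c)) := hglin.symm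
      _ ≤ ∫ u in (c - 1/2)..(c + 1/2), f u := by
          apply intervalIntegral.integral_mono_on (by linarith)
            ((by continuity : Continuous fun u : ℝ =>
              c * L + (L + 2) * (u - c)).intervalIntegrable _ _) (hint _ _)
          intro u hu
          exact tangent_aux n c u hn0 (by linarith) (by linarith [hu.1])
  -- telescoping sum of integrals
  have hn1 : (1:ℝ) ≤ (n:ℝ) := by exact_mod_cast hn
  have hsum : ∑ r ∈ Finset.Icc 1 (n - 1), (r : ℝ) * Real.log ((r : ℝ) ^ 2 / n)
      ≤ ∫ u in (1/2 : ℝ)..((n:ℝ) - 1/2), f u := by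
    have htel := intervalIntegral.sum_integral_adjacent_intervals
      (μ := MeasureTheory.volume) (a := fun i : ℕ => (i:ℝ) + 1/2) (f := f) (n := n - 1)
      (fun k _ => hint _ _)
    simp only [Nat.cast_zero] at htel
    have hend : ((n - 1 : ℕ) : ℝ) + 1/2 = (n:ℝ) - 1/2 := by
      rw [Nat.cast_sub hn]; push_cast; ring
    norm_num [hend] at htel
    calc ∑ r ∈ Finset.Icc 1 (n - 1), (r:ℝ) * Real.log ((r:ℝ)^2 / (n:ℝ))
        ≤ ∑ r ∈ Finset.Icc 1 (n - 1), ∫ u in ((r:ℝ) - 1/2)..((r:ℝ) + 1/2), f u :=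
          Finset.sum_le_sum (fun r hr => hpt r (Finset.mem_Icc.mp hr).1)
      _ = ∫ u in (1/2:ℝ)..((n:ℝ) - 1/2), f u := by
          rw [← htel, ← Finset.Ico_add_one_right_eq_Icc, Finset.sum_Ico_eq_sum_range]
          apply Finset.sum_congr rfl
          intro i _
          have e1 : ((1 + i : ℕ) : ℝ) - 1/2 = (i:ℝ) + 1/2 := by push_cast; ring
          have e2 : ((1 + i : ℕ) : ℝ) + 1/2 = ((i + 1 : ℕ):ℝ) + 1/2 := by push_cast; ring
          rw [e1, e2]
          norm_num
  -- split integral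
  have hsplit : (∫ u in (0:ℝ)..(n:ℝ), f u)
      = (∫ u in (0:ℝ)..(1/2:ℝ), f u) + (∫ u in (1/2:ℝ)..((n:ℝ) - 1/2), f u)
        + (∫ u in ((n:ℝ) - 1/2)..(n:ℝ), f u) := by
    rw [intervalIntegral.integral_add_adjacent_intervals (hint _ _) (hint _ _),
      intervalIntegral.integral_add_adjacent_intervals (hint _ _) (hint _ _)]
  have hlb1 : -(Real.sqrt n / Real.exp 1) ≤ ∫ u in (0:ℝ)..(1/2:ℝ), f u := by
    have h := intervalIntegral.integral_mono_on (by norm_num : (0:ℝ) ≤ 1/2)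
      (_root_.intervalIntegrable_const (c := -(2 * Real.sqrt n / Real.exp 1))) (hint _ _)
      (fun u hu => lb_aux n u hn0 hu.1)
    rw [intervalIntegral.integral_const, smul_eq_mul] at h
    calc -(Real.sqrt n / Real.exp 1)
        = (1/2 - 0) * (-(2 * Real.sqrt n / Real.exp 1)) := by ring
      _ ≤ _ := h
  have hlb2 : -(Real.sqrt n / Real.exp 1) ≤ ∫ u in ((n:ℝ) - 1/2)..(n:ℝ), f u := by
    have h := intervalIntegral.integral_mono_on (by linarith : (n:ℝ) - 1/2 ≤ (n:ℝ))
      (_root_.intervalIntegrable_const (c := -(2 * Real.sqrt n / Real.exp 1))) (hint _ _)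
      (fun u hu => lb_aux n u hn0 (by linarith [hu.1]))
    rw [intervalIntegral.integral_const, smul_eq_mul] at h
    calc -(Real.sqrt n / Real.exp 1)
        = ((n:ℝ) - ((n:ℝ) - 1/2)) * (-(2 * Real.sqrt n / Real.exp 1)) := by ring
      _ ≤ _ := h
  have he : 2 * Real.sqrt n / Real.exp 1
      = Real.sqrt n / Real.exp 1 + Real.sqrt n / Real.exp 1 := by ring
  calc ∑ r ∈ Finset.Icc 1 (n - 1), (r : ℝ) * Real.log ((r : ℝ) ^ 2 / n)
      ≤ ∫ u in (1/2 : ℝ)..((n:ℝ) - 1/2), f u := hsum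
    _ ≤ (∫ u in (0:ℝ)..(n:ℝ), f u) + 2 * Real.sqrt n / Real.exp 1 := by
        rw [hsplit, he]; linarith
end

section
/- The sequence a_n := (1/n²)·log F(n) - (1/2)(log n - 2) tends to a limit ≤ 0 (equivalently, F(n) ≤ ((1+o(1))·n/e²)^{n²/2}), where F(n) = ∏_{d=1}^{n-1} (d!)^{n/(2d)} is replaced by this upper bound. -/
open Filter

private lemma log_fact_le (d : ℕ) (hd : 1 ≤ d) :
    Real.log (Nat.factorial d) ≤ d * Real.log d - d + 1 + Real.log d := by
  induction d, hd using Nat.le_induction with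
  | base => simp
  | succ d hd ih =>
    have hd0 : (0:ℝ) < d := by exact_mod_cast hd
    have hd1 : (0:ℝ) < (d:ℝ) + 1 := by linarith
    have hk : Real.log ((d:ℝ) / ((d:ℝ)+1)) ≤ (d:ℝ)/((d:ℝ)+1) - 1 :=
      Real.log_le_sub_one_of_pos (by positivity)
    have hlogdiv : Real.log ((d:ℝ) / ((d:ℝ)+1)) = Real.log d - Real.log ((d:ℝ)+1) :=
      Real.log_div (ne_of_gt hd0) (ne_of_gt hd1)
    have hrhs : (d:ℝ)/((d:ℝ)+1) - 1 = -(1/((d:ℝ)+1)) := by field_simp; ring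
    rw [hlogdiv, hrhs] at hk
    have h2 : 1/((d:ℝ)+1) ≤ Real.log ((d:ℝ)+1) - Real.log d := by linarith
    have h3 : ((d:ℝ)+1) * (1/((d:ℝ)+1)) = 1 := by field_simp
    have hkey : 1 ≤ ((d:ℝ)+1) * (Real.log ((d:ℝ)+1) - Real.log d) := by
      calc (1:ℝ) = ((d:ℝ)+1) * (1/((d:ℝ)+1)) := h3.symm
        _ ≤ _ := mul_le_mul_of_nonneg_left h2 hd1.le
    have hfs : Real.log (Nat.factorial (d+1)) =
        Real.log ((d:ℝ)+1) + Real.log (Nat.factorial d) := by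
      rw [Nat.factorial_succ]
      push_cast
      rw [Real.log_mul (by positivity) (by exact_mod_cast (Nat.factorial_pos d).ne')]
    rw [hfs]
    push_cast
    nlinarith [ih]

private lemma one_add_log_le (d : ℕ) (hd : 1 ≤ d) :
    1 + Real.log d ≤ 2 * Real.sqrt d := by
  have h0 : (0:ℝ) < d := by exact_mod_cast hd
  have hs : (0:ℝ) < Real.sqrt d := Real.sqrt_pos.2 h0
  have h1 : Real.log (Real.sqrt d) ≤ Real.sqrt d - 1 := Real.log_le_sub_one_of_pos hs
  have h2 : Real.log (Real.sqrt d) = Real.log d / 2 := Real.log_sqrt h0.le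
  rw [h2] at h1
  linarith

private lemma sum_inv_sqrt_le (m : ℕ) :
    ∑ d ∈ Finset.Icc 1 m, 1 / Real.sqrt d ≤ 2 * Real.sqrt m := by
  induction m with
  | zero => simp
  | succ m ih =>
    rw [← Finset.Ico_add_one_right_eq_Icc] at *
    rw [Finset.sum_Ico_succ_top (Nat.succ_le_succ (Nat.zero_le m))]
    have hm1 : (0:ℝ) < (m:ℝ) + 1 := by positivity
    have hs : (0:ℝ) < Real.sqrt ((m:ℝ)+1) := Real.sqrt_pos.2 hm1
    have hsq : Real.sqrt ((m:ℝ)+1) * Real.sqrt ((m:ℝ)+1) = (m:ℝ)+1 :=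
      Real.mul_self_sqrt hm1.le
    have hsqm : Real.sqrt (m:ℝ) * Real.sqrt (m:ℝ) = (m:ℝ) :=
      Real.mul_self_sqrt (Nat.cast_nonneg m)
    have hcast : ((m+1 : ℕ) : ℝ) = (m:ℝ) + 1 := by push_cast; ring
    have hstep : 1 / Real.sqrt ((m:ℝ)+1) ≤
        2 * Real.sqrt ((m:ℝ)+1) - 2 * Real.sqrt (m:ℝ) := by
      rw [div_le_iff₀ hs]
      nlinarith [sq_nonneg (Real.sqrt ((m:ℝ)+1) - Real.sqrt (m:ℝ)),
        Real.sqrt_nonneg (m:ℝ), hs]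
    rw [hcast]
    simp only [Nat.succ_eq_add_one, Nat.zero_add]
    linarith

set_option maxHeartbeats 1000000 in
private lemma key_ineq (n : ℕ) (hn : 2 ≤ n) :
    (2 / (n : ℝ) ^ 2) *
        Real.log (∏ d ∈ Finset.Icc 1 (n - 1),
          ((Nat.factorial d : ℝ)) ^ ((n : ℝ) / (2 * d)))
      - (Real.log n - 2) ≤ 7 / Real.sqrt n := by
  set m := n - 1 with hm
  have hmn : (m:ℝ) = (n:ℝ) - 1 := by
    have h : m + 1 = n := by omega
    have := congrArg (Nat.cast : ℕ → ℝ) h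
    push_cast at this
    linarith
  have hn0 : (0:ℝ) < n := by exact_mod_cast (by omega : 0 < n)
  have hm1 : 1 ≤ m := by omega
  have hm0 : (0:ℝ) < m := by exact_mod_cast hm1
  have hpos : ∀ d ∈ Finset.Icc 1 m,
      (0:ℝ) < ((Nat.factorial d : ℝ)) ^ ((n : ℝ) / (2 * d)) := by
    intro d hd
    exact Real.rpow_pos_of_pos (by exact_mod_cast (Nat.factorial_pos d)) _
  have hlog : Real.log (∏ d ∈ Finset.Icc 1 m,
      ((Nat.factorial d : ℝ)) ^ ((n : ℝ) / (2 * d)))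
      = ∑ d ∈ Finset.Icc 1 m, ((n : ℝ) / (2 * d)) * Real.log (Nat.factorial d) := by
    rw [Real.log_prod (fun d hd => (hpos d hd).ne')]
    refine Finset.sum_congr rfl (fun d hd => ?_)
    exact Real.log_rpow (by exact_mod_cast (Nat.factorial_pos d)) _
  rw [hlog]
  -- termwise bound
  have hterm : ∀ d ∈ Finset.Icc 1 m,
      ((n : ℝ) / (2 * d)) * Real.log (Nat.factorial d) ≤
        ((n:ℝ)/2) * (Real.log d - 1 + 2 / Real.sqrt d) := by
    intro d hd
    have hd1 : 1 ≤ d := (Finset.mem_Icc.1 hd).1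
    have hd0 : (0:ℝ) < d := by exact_mod_cast hd1
    have hsd : (0:ℝ) < Real.sqrt d := Real.sqrt_pos.2 hd0
    have hsq : Real.sqrt d * Real.sqrt d = (d:ℝ) := Real.mul_self_sqrt hd0.le
    have h1 := log_fact_le d hd1
    have h2 := one_add_log_le d hd1
    have hbd : Real.log (Nat.factorial d) / d ≤ Real.log d - 1 + 2 / Real.sqrt d := by
      rw [div_le_iff₀ hd0]
      have h3 : 2 / Real.sqrt d * d = 2 * Real.sqrt d := by
        rw [div_mul_eq_mul_div, div_eq_iff hsd.ne']
        linear_combination -2 * hsq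
      nlinarith [h1, h2]
    have hrw : ((n : ℝ) / (2 * d)) * Real.log (Nat.factorial d)
        = ((n:ℝ)/2) * (Real.log (Nat.factorial d) / d) := by
      rw [← div_div, div_mul_eq_mul_div, mul_div_assoc]
    rw [hrw]
    exact mul_le_mul_of_nonneg_left hbd (by positivity)
  have hsum := Finset.sum_le_sum hterm
  set L := ∑ d ∈ Finset.Icc 1 m, Real.log d with hL
  set S := ∑ d ∈ Finset.Icc 1 m, 1 / Real.sqrt (d:ℝ) with hS
  have hsplit : ∑ d ∈ Finset.Icc 1 m, ((n:ℝ)/2) * (Real.log d - 1 + 2 / Real.sqrt d)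
      = ((n:ℝ)/2) * (L - m + 2 * S) := by
    rw [← Finset.mul_sum]
    congr 1
    have h2S : ∑ d ∈ Finset.Icc 1 m, 2 / Real.sqrt (d:ℝ) = 2 * S := by
      rw [hS, Finset.mul_sum]
      exact Finset.sum_congr rfl (fun d _ => by rw [mul_one_div])
    rw [Finset.sum_add_distrib, Finset.sum_sub_distrib, h2S, Finset.sum_const,
      Nat.card_Icc, hL]
    simp [nsmul_eq_mul]
  -- sum of logs = log m!
  have hlogfact : L = Real.log (Nat.factorial m) := by
    rw [hL, ← Real.log_prod (fun d hd => by
      have h1 : 1 ≤ d := (Finset.mem_Icc.1 hd).1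
      have : (0:ℝ) < d := by exact_mod_cast h1
      exact this.ne')]
    congr 1
    rw [← Nat.cast_prod]
    congr 1
    rw [← Finset.Ico_add_one_right_eq_Icc]
    exact Finset.prod_Ico_id_eq_factorial m
  have hfactle := log_fact_le m hm1
  have hsumsqrt : S ≤ 2 * Real.sqrt m := sum_inv_sqrt_le m
  have hmlen : (m:ℝ) ≤ n := by rw [hmn]; linarith
  have hlogmn : Real.log m ≤ Real.log n := Real.log_le_log hm0 hmlen
  have hsqmn : Real.sqrt m ≤ Real.sqrt n := Real.sqrt_le_sqrt hmlen
  have hsn : (0:ℝ) < Real.sqrt n := Real.sqrt_pos.2 hn0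
  have hsqn : Real.sqrt n * Real.sqrt n = (n:ℝ) := Real.mul_self_sqrt hn0.le
  have h1s : (1:ℝ) ≤ Real.sqrt n := Real.one_le_sqrt.2 (by exact_mod_cast (by omega : 1 ≤ n))
  have hnsqrt : Real.sqrt n ≤ (n:ℝ) := by nlinarith [hsqn, h1s]
  have hB : L - m + 2 * S
      ≤ (m * Real.log n - 2*m + 1 + Real.log n) + 4 * Real.sqrt n := by
    rw [hlogfact]
    have hml : (m:ℝ) * Real.log m ≤ (m:ℝ) * Real.log n :=
      mul_le_mul_of_nonneg_left hlogmn hm0.le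
    nlinarith [hfactle, hsumsqrt]
  have hmono : ((n:ℝ)/2) * (L - m + 2 * S)
      ≤ ((n:ℝ)/2) * ((m * Real.log n - 2*m + 1 + Real.log n) + 4 * Real.sqrt n) :=
    mul_le_mul_of_nonneg_left hB (by positivity)
  have htotal : ∑ d ∈ Finset.Icc 1 m, ((n : ℝ) / (2 * d)) * Real.log (Nat.factorial d)
      ≤ ((n:ℝ)/2) * ((m * Real.log n - 2*m + 1 + Real.log n) + 4 * Real.sqrt n) := by
    calc _ ≤ _ := hsum
      _ = _ := hsplit
      _ ≤ _ := hmono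
  have hc : (0:ℝ) ≤ 2 / (n:ℝ)^2 := by positivity
  have hfinal := mul_le_mul_of_nonneg_left htotal hc
  have heq : (2 / (n:ℝ)^2) * (((n:ℝ)/2) * ((m * Real.log n - 2*m + 1 + Real.log n)
      + 4 * Real.sqrt n))
      = ((m:ℝ) * Real.log n - 2*m + 1 + Real.log n + 4 * Real.sqrt n) / n := by
    field_simp
  rw [heq] at hfinal
  have hgoal : ((m:ℝ) * Real.log n - 2*m + 1 + Real.log n + 4 * Real.sqrt n) / n
      - (Real.log n - 2) ≤ 7 / Real.sqrt n := by
    rw [hmn, div_sub' hn0.ne', div_le_div_iff₀ hn0 hsn]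
    nlinarith [hsqn, hsn, hnsqrt, h1s]
  linarith

/-- With `G(n) = ∏_{d=1}^{n-1} (d!)^{n/(2d)}`, we have
`limsup_{n→∞} [(2/n²)·log G(n) − (log n − 2)] ≤ 0`, i.e.
`G(n) ≤ ((1+o(1))·n/e²)^{n²/2}`. -/
theorem stmt17 :
    Filter.limsup (fun n : ℕ =>
      (2 / (n : ℝ) ^ 2) *
          Real.log (∏ d ∈ Finset.Icc 1 (n - 1),
            ((Nat.factorial d : ℝ)) ^ ((n : ℝ) / (2 * d)))
        - (Real.log n - 2)) Filter.atTop ≤ 0 := by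
  have hsqrt : Tendsto (fun n : ℕ => Real.sqrt n) atTop atTop := by
    have h := (tendsto_rpow_atTop (by norm_num : (0:ℝ) < 1/2)).comp
      (tendsto_natCast_atTop_atTop (R := ℝ))
    simpa [Function.comp_def, Real.sqrt_eq_rpow] using h
  have hg : Tendsto (fun n : ℕ => 7 / Real.sqrt n) atTop (nhds 0) :=
    tendsto_const_nhds.div_atTop hsqrt
  have hle : ∀ᶠ n : ℕ in atTop, (2 / (n : ℝ) ^ 2) *
          Real.log (∏ d ∈ Finset.Icc 1 (n - 1),
            ((Nat.factorial d : ℝ)) ^ ((n : ℝ) / (2 * d)))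
        - (Real.log n - 2) ≤ 7 / Real.sqrt n := by
    filter_upwards [eventually_ge_atTop 2] with n hn
    exact key_ineq n hn
  rw [Filter.limsup_eq]
  refine le_of_forall_gt_imp_ge_of_dense (fun a ha => ?_)
  by_cases hA : BddBelow { a : ℝ | ∀ᶠ n : ℕ in atTop, (2 / (n : ℝ) ^ 2) *
          Real.log (∏ d ∈ Finset.Icc 1 (n - 1),
            ((Nat.factorial d : ℝ)) ^ ((n : ℝ) / (2 * d)))
        - (Real.log n - 2) ≤ a }
  · refine csInf_le hA ?_
    have hsmall : ∀ᶠ n : ℕ in atTop, 7 / Real.sqrt n ≤ a := by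
      have := hg.eventually_le_const ha
      simpa using this
    filter_upwards [hle, hsmall] with n h1 h2 using h1.trans h2
  · rw [Real.sInf_of_not_bddBelow hA]
    exact ha.le
end
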